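/- Let ρ₁, ρ₂ be finite positive Borel measures and ρ a finite signed Borel measure on ℝ², all supported in the set U_{n+1} = {(s,t) : |s| ≥ 1/(n+1), |t| ≥ 1/(n+1)}, satisfying (1+s²)/s² dρ₁ = (1+t²)/t² dρ₂ = √(1+s²)√(1+t²)/(st) dρ as measures on U_{n+1}. Then the common measure τ := (1+s²)/s² dρ₁ is a finite positive measure, and if λ := τ(ℝ²) > 0 and μ := τ/λ, then for all z, w ∈ ℂ \ ℝ: ∫ (z²+zs)/(1−zs) dρ₁ + ∫ (w²+wt)/(1−wt) dρ₂ + ∫ zw√(1+s²)√(1+t²)/((1−zs)(1−wt)) dρ = az + bw − λ + λ ∫ 1/((1−zs)(1−wt)) dμ(s,t), where a = −λ ∫ s/(1+s²) dμ and b = −λ ∫ t/(1+t²) dμ. -/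

import Mathlib

open MeasureTheory Complex
open scoped ENNReal NNReal

lemma aux_ne {z : ℂ} (hz : z.im ≠ 0) (s : ℝ) : 1 - z * (s:ℂ) ≠ 0 := by
  intro h
  have him : z.im * s = 0 := by
    have := congrArg Complex.im h
    simpa using this
  rcases mul_eq_zero.1 him with h2 | h2
  · exact hz h2
  · rw [h2] at h; simp at h

lemma aux_sq (z : ℂ) (s : ℝ) :
    Complex.normSq z * Complex.normSq (1 - z * (s:ℂ)) =
      (Complex.normSq z * s - z.re)^2 + z.im^2 := by
  simp [Complex.normSq_apply, Complex.sub_re, Complex.sub_im, Complex.mul_re, Complex.mul_im]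
  ring

lemma aux_lb1 (z : ℂ) (s : ℝ) : |z.im| ≤ ‖z‖ * ‖1 - z * (s:ℂ)‖ := by
  have h := aux_sq z s
  have h2 : z.im^2 ≤ Complex.normSq z * Complex.normSq (1 - z * (s:ℂ)) := by
    nlinarith [sq_nonneg (Complex.normSq z * s - z.re)]
  have e1 : Complex.normSq z = ‖z‖^2 := (Complex.sq_norm z).symm
  have e2 : Complex.normSq (1 - z * (s:ℂ)) = ‖1 - z * (s:ℂ)‖^2 := (Complex.sq_norm _).symm
  nlinarith [abs_nonneg z.im, _root_.sq_abs z.im, norm_nonneg z, norm_nonneg (1 - z * (s:ℂ)),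
    mul_nonneg (norm_nonneg z) (norm_nonneg (1 - z * (s:ℂ)))]

lemma aux_lb2 (z : ℂ) (s : ℝ) : |z.im| * |s| ≤ ‖1 - z * (s:ℂ)‖ := by
  have : |(1 - z * (s:ℂ)).im| ≤ ‖1 - z * (s:ℂ)‖ := Complex.abs_im_le_norm _
  have e : (1 - z * (s:ℂ)).im = -(z.im * s) := by simp
  rw [e] at this
  calc |z.im| * |s| = |-(z.im * s)| := by rw [abs_neg, abs_mul]
  _ ≤ _ := this

lemma aux_zpos {z : ℂ} (hz : z.im ≠ 0) : 0 < ‖z‖ := by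
  have : z ≠ 0 := fun h => hz (by simp [h])
  simpa using this

lemma bound_inv {z : ℂ} (hz : z.im ≠ 0) (s : ℝ) :
    ‖(1 - z * (s:ℂ))⁻¹‖ ≤ ‖z‖ / |z.im| := by
  have him : 0 < |z.im| := abs_pos.2 hz
  have hzn := aux_zpos hz
  have hd : 0 < ‖1 - z * (s:ℂ)‖ := norm_pos_iff.2 (aux_ne hz s)
  rw [norm_inv]
  rw [inv_le_iff_one_le_mul₀ hd, div_mul_eq_mul_div, le_div_iff₀ him, one_mul]
  have h1 := aux_lb1 z s
  have h2 : ‖z‖ * ‖1 - z * (s:ℂ)‖ = ‖1 - z * (s:ℂ)‖ * ‖z‖ := mul_comm _ _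
  linarith

lemma bound_frac {z : ℂ} (hz : z.im ≠ 0) (s : ℝ) :
    ‖z * (s:ℂ) / (1 - z * (s:ℂ))‖ ≤ ‖z‖ / |z.im| := by
  have him : 0 < |z.im| := abs_pos.2 hz
  rcases eq_or_ne s 0 with rfl | hs
  · simp; positivity
  · have hd : 0 < ‖1 - z * (s:ℂ)‖ := norm_pos_iff.2 (aux_ne hz s)
    have hsp : 0 < |s| := abs_pos.2 hs
    rw [norm_div, norm_mul, Complex.norm_real, Real.norm_eq_abs, div_le_div_iff₀ hd him]
    calc ‖z‖ * |s| * |z.im| = ‖z‖ * (|z.im| * |s|) := by ring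
    _ ≤ ‖z‖ * ‖1 - z * (s:ℂ)‖ := by
        exact mul_le_mul_of_nonneg_left (aux_lb2 z s) (norm_nonneg z)

lemma aux_one_add_sq_ne (s : ℝ) : (1 : ℂ) + (s:ℂ)^2 ≠ 0 := by
  have : ((1 + s^2 : ℝ) : ℂ) ≠ 0 := by
    rw [Complex.ofReal_ne_zero]; positivity
  simpa using this

lemma max_sub_max (a : ℝ) : max a 0 - max (-a) 0 = a := by
  rcases le_total a 0 with h | h <;> simp [max_eq_left, max_eq_right, h] <;> linarith

lemma sqrt_one_add_sq_pos (s : ℝ) : 0 < Real.sqrt (1 + s^2) :=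
  Real.sqrt_pos.2 (by positivity)

lemma abs_le_sqrt_one_add_sq (s : ℝ) : |s| ≤ Real.sqrt (1 + s^2) := by
  rw [show |s| = Real.sqrt (s^2) by rw [Real.sqrt_sq_eq_abs]]
  exact Real.sqrt_le_sqrt (by nlinarith)


/-- Integral of a complex-valued function against a signed measure, via the
Jordan decomposition. -/
noncomputable def signedIntegralC (s : MeasureTheory.SignedMeasure (ℝ × ℝ)) (f : ℝ × ℝ → ℂ) : ℂ :=
  (∫ p, f p ∂s.toJordanDecomposition.posPart) - ∫ p, f p ∂s.toJordanDecomposition.negPart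

set_option maxHeartbeats 2000000 in
theorem poisson_form_of_off_axis_part (n : ℕ) (τ : Measure (ℝ × ℝ)) [IsFiniteMeasure τ]
    (ρ₁ ρ₂ : Measure (ℝ × ℝ)) (ρ : SignedMeasure (ℝ × ℝ))
    (hsupp : τ {p : ℝ × ℝ | ¬((1 : ℝ) / (n + 1) ≤ |p.1| ∧ (1 : ℝ) / (n + 1) ≤ |p.2|)} = 0)
    (h1 : ρ₁ = τ.withDensity (fun p : ℝ × ℝ => ENNReal.ofReal (p.1 ^ 2 / (1 + p.1 ^ 2))))
    (h2 : ρ₂ = τ.withDensity (fun p : ℝ × ℝ => ENNReal.ofReal (p.2 ^ 2 / (1 + p.2 ^ 2))))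
    (hρ : ∀ E : Set (ℝ × ℝ), MeasurableSet E →
      ρ E = ∫ p in E, p.1 * p.2 / (Real.sqrt (1 + p.1 ^ 2) * Real.sqrt (1 + p.2 ^ 2)) ∂τ)
    (lam : ℝ) (hlam : lam = (τ Set.univ).toReal) (hpos : 0 < lam)
    (μ : Measure (ℝ × ℝ)) (hμ : μ = (τ Set.univ)⁻¹ • τ)
    (a b : ℝ)
    (ha : a = -lam * ∫ p : ℝ × ℝ, p.1 / (1 + p.1 ^ 2) ∂μ)
    (hb : b = -lam * ∫ p : ℝ × ℝ, p.2 / (1 + p.2 ^ 2) ∂μ)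
    (z w : ℂ) (hz : z.im ≠ 0) (hw : w.im ≠ 0) :
    (∫ p : ℝ × ℝ, (z ^ 2 + z * (p.1 : ℂ)) / (1 - z * (p.1 : ℂ)) ∂ρ₁) +
        (∫ p : ℝ × ℝ, (w ^ 2 + w * (p.2 : ℂ)) / (1 - w * (p.2 : ℂ)) ∂ρ₂) +
        signedIntegralC ρ (fun p : ℝ × ℝ =>
          z * w * (Real.sqrt (1 + p.1 ^ 2) : ℂ) * (Real.sqrt (1 + p.2 ^ 2) : ℂ) /
            ((1 - z * (p.1 : ℂ)) * (1 - w * (p.2 : ℂ)))) =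
      (a : ℂ) * z + (b : ℂ) * w - (lam : ℂ) +
        (lam : ℂ) * ∫ p : ℝ × ℝ, ((1 - z * (p.1 : ℂ)) * (1 - w * (p.2 : ℂ)))⁻¹ ∂μ := by
  have hlam0 : lam ≠ 0 := ne_of_gt hpos
  set h : ℝ × ℝ → ℝ :=
    fun p => p.1 * p.2 / (Real.sqrt (1 + p.1 ^ 2) * Real.sqrt (1 + p.2 ^ 2)) with hdef
  set f : ℝ × ℝ → ℂ := fun p : ℝ × ℝ =>
      z * w * (Real.sqrt (1 + p.1 ^ 2) : ℂ) * (Real.sqrt (1 + p.2 ^ 2) : ℂ) /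
        ((1 - z * (p.1 : ℂ)) * (1 - w * (p.2 : ℂ))) with fdef
  -- continuity facts
  have hcont : Continuous h := by
    apply Continuous.div (by fun_prop) (by fun_prop)
    intro p
    exact ne_of_gt (mul_pos (sqrt_one_add_sq_pos p.1) (sqrt_one_add_sq_pos p.2))
  have hfcont : Continuous f := by
    apply Continuous.div (by fun_prop) (by fun_prop)
    intro p
    exact mul_ne_zero (aux_ne hz p.1) (aux_ne hw p.2)
  have hbdd : ∀ p : ℝ × ℝ, |h p| ≤ 1 := by
    intro p
    rw [hdef]
    rw [abs_div, div_le_one (by positivity)]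
    rw [abs_mul, abs_of_pos (mul_pos (sqrt_one_add_sq_pos p.1) (sqrt_one_add_sq_pos p.2))]
    exact mul_le_mul (abs_le_sqrt_one_add_sq p.1) (abs_le_sqrt_one_add_sq p.2) (abs_nonneg _)
      (le_of_lt (sqrt_one_add_sq_pos p.1))
  have hint : Integrable h τ :=
    (integrable_const (1:ℝ)).mono' hcont.aestronglyMeasurable
      (Filter.Eventually.of_forall fun p => by simpa using hbdd p)
  -- Jordan decomposition of ρ
  have hρeq : ρ = (0 : SignedMeasure (ℝ × ℝ)) + τ.withDensityᵥ h := by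
    ext E hE
    rw [VectorMeasure.add_apply, VectorMeasure.zero_apply, zero_add,
      withDensityᵥ_apply hint hE, hρ E hE]
  have hJ := SignedMeasure.toJordanDecomposition_eq_of_eq_add_withDensity hcont.measurable hint
    VectorMeasure.MutuallySingular.zero_left hρeq
  have hposP : ρ.toJordanDecomposition.posPart
      = τ.withDensity fun p => ENNReal.ofReal (h p) := by
    rw [hJ]; simp [SignedMeasure.toJordanDecomposition_zero]
  have hnegP : ρ.toJordanDecomposition.negPart
      = τ.withDensity fun p => ENNReal.ofReal (-h p) := by
    rw [hJ]; simp [SignedMeasure.toJordanDecomposition_zero]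
  -- convert the three integrals to integrals against τ
  have convP : (∫ p, f p ∂(τ.withDensity fun p => ENNReal.ofReal (h p)))
      = ∫ p, max (h p) 0 • f p ∂τ := by
    have e : (fun p => ENNReal.ofReal (h p))
        = fun p => ((fun q => (h q).toNNReal) p : ℝ≥0∞) := rfl
    rw [e, integral_withDensity_eq_integral_smul hcont.measurable.real_toNNReal f]
    congr 1
  have convN : (∫ p, f p ∂(τ.withDensity fun p => ENNReal.ofReal (-h p)))
      = ∫ p, max (-h p) 0 • f p ∂τ := by
    have e : (fun p => ENNReal.ofReal (-h p))
        = fun p => ((fun q => (-h q).toNNReal) p : ℝ≥0∞) := rfl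
    rw [e, integral_withDensity_eq_integral_smul (show Measurable (fun q => (-h q).toNNReal) from hcont.measurable.neg.real_toNNReal) f]
    congr 1
  have conv1 : (∫ p : ℝ × ℝ, (z ^ 2 + z * (p.1 : ℂ)) / (1 - z * (p.1 : ℂ)) ∂ρ₁)
      = ∫ p : ℝ × ℝ, (p.1 ^ 2 / (1 + p.1 ^ 2)) •
          ((z ^ 2 + z * (p.1 : ℂ)) / (1 - z * (p.1 : ℂ))) ∂τ := by
    have c1 : Continuous fun p : ℝ × ℝ => p.1 ^ 2 / (1 + p.1 ^ 2) :=
      Continuous.div (by fun_prop) (by fun_prop) (fun p => by positivity)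
    rw [h1]
    have e : (fun p : ℝ × ℝ => ENNReal.ofReal (p.1 ^ 2 / (1 + p.1 ^ 2)))
        = fun p : ℝ × ℝ => ((fun q : ℝ × ℝ => (q.1 ^ 2 / (1 + q.1 ^ 2)).toNNReal) p : ℝ≥0∞) := rfl
    rw [e, integral_withDensity_eq_integral_smul c1.measurable.real_toNNReal]
    congr 1; funext p
    rw [NNReal.smul_def, Real.coe_toNNReal _ (by positivity)]
  have conv2 : (∫ p : ℝ × ℝ, (w ^ 2 + w * (p.2 : ℂ)) / (1 - w * (p.2 : ℂ)) ∂ρ₂)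
      = ∫ p : ℝ × ℝ, (p.2 ^ 2 / (1 + p.2 ^ 2)) •
          ((w ^ 2 + w * (p.2 : ℂ)) / (1 - w * (p.2 : ℂ))) ∂τ := by
    have c1 : Continuous fun p : ℝ × ℝ => p.2 ^ 2 / (1 + p.2 ^ 2) :=
      Continuous.div (by fun_prop) (by fun_prop) (fun p => by positivity)
    rw [h2]
    have e : (fun p : ℝ × ℝ => ENNReal.ofReal (p.2 ^ 2 / (1 + p.2 ^ 2)))
        = fun p : ℝ × ℝ => ((fun q : ℝ × ℝ => (q.2 ^ 2 / (1 + q.2 ^ 2)).toNNReal) p : ℝ≥0∞) := rfl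
    rw [e, integral_withDensity_eq_integral_smul c1.measurable.real_toNNReal]
    congr 1; funext p
    rw [NNReal.smul_def, Real.coe_toNNReal _ (by positivity)]
  -- integrability of the basic building blocks
  have intbdd : ∀ (g : ℝ × ℝ → ℂ) (C : ℝ), Continuous g → (∀ p, ‖g p‖ ≤ C) →
      Integrable g τ := fun g C hg hb =>
    (integrable_const C).mono' hg.aestronglyMeasurable (Filter.Eventually.of_forall hb)
  have cX1 : Continuous fun p : ℝ × ℝ => z * (p.1 : ℂ) / (1 - z * (p.1 : ℂ)) :=
    Continuous.div (by fun_prop) (by fun_prop) fun p => aux_ne hz p.1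
  have cX2 : Continuous fun p : ℝ × ℝ => w * (p.2 : ℂ) / (1 - w * (p.2 : ℂ)) :=
    Continuous.div (by fun_prop) (by fun_prop) fun p => aux_ne hw p.2
  have iX1 : Integrable (fun p : ℝ × ℝ => z * (p.1 : ℂ) / (1 - z * (p.1 : ℂ))) τ :=
    intbdd _ (‖z‖ / |z.im|) cX1 fun p => bound_frac hz p.1
  have iX2 : Integrable (fun p : ℝ × ℝ => w * (p.2 : ℂ) / (1 - w * (p.2 : ℂ))) τ :=
    intbdd _ (‖w‖ / |w.im|) cX2 fun p => bound_frac hw p.2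
  have prodbd : ∀ p : ℝ × ℝ,
      ‖(z * (p.1 : ℂ) / (1 - z * (p.1 : ℂ))) * (w * (p.2 : ℂ) / (1 - w * (p.2 : ℂ)))‖ ≤
        (‖z‖ / |z.im|) * (‖w‖ / |w.im|) := by
    intro p
    rw [norm_mul]
    have h1 := bound_frac hz p.1
    have h2 := bound_frac hw p.2
    exact mul_le_mul h1 h2 (norm_nonneg _) (by positivity)
  have iK : Integrable (fun p : ℝ × ℝ =>
      (z * (p.1 : ℂ) / (1 - z * (p.1 : ℂ))) * (w * (p.2 : ℂ) / (1 - w * (p.2 : ℂ)))) τ :=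
    intbdd _ _ (cX1.mul cX2) prodbd
  have habs1 : ∀ s : ℝ, |s / (1 + s ^ 2)| ≤ 1 := by
    intro s
    rw [abs_div, abs_of_pos (by positivity : (0:ℝ) < 1 + s ^ 2), div_le_one (by positivity)]
    nlinarith [_root_.sq_abs s, abs_nonneg s]
  have iY1 : Integrable (fun p : ℝ × ℝ => z * ((p.1 / (1 + p.1 ^ 2) : ℝ) : ℂ)) τ := by
    refine intbdd _ ‖z‖ (continuous_const.mul (Complex.continuous_ofReal.comp
      (Continuous.div (by fun_prop) (by fun_prop) fun p => by positivity))) fun p => ?_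
    rw [norm_mul, Complex.norm_real, Real.norm_eq_abs]
    calc ‖z‖ * |p.1 / (1 + p.1 ^ 2)| ≤ ‖z‖ * 1 :=
        mul_le_mul_of_nonneg_left (habs1 p.1) (norm_nonneg z)
    _ = ‖z‖ := mul_one _
  have iY2 : Integrable (fun p : ℝ × ℝ => w * ((p.2 / (1 + p.2 ^ 2) : ℝ) : ℂ)) τ := by
    refine intbdd _ ‖w‖ (continuous_const.mul (Complex.continuous_ofReal.comp
      (Continuous.div (by fun_prop) (by fun_prop) fun p => by positivity))) fun p => ?_
    rw [norm_mul, Complex.norm_real, Real.norm_eq_abs]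
    calc ‖w‖ * |p.2 / (1 + p.2 ^ 2)| ≤ ‖w‖ * 1 :=
        mul_le_mul_of_nonneg_left (habs1 p.2) (norm_nonneg w)
    _ = ‖w‖ := mul_one _
  have iG : Integrable (fun p : ℝ × ℝ =>
      ((1 - z * (p.1 : ℂ)) * (1 - w * (p.2 : ℂ)))⁻¹) τ := by
    refine intbdd _ ((‖z‖ / |z.im|) * (‖w‖ / |w.im|))
      (Continuous.inv₀ (by fun_prop) fun p => mul_ne_zero (aux_ne hz p.1) (aux_ne hw p.2))
      fun p => ?_
    rw [mul_inv, norm_mul]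
    exact mul_le_mul (bound_inv hz p.1) (bound_inv hw p.2) (norm_nonneg _) (by positivity)
  -- pointwise identities
  have heqK : ∀ p : ℝ × ℝ, h p • f p =
      (z * (p.1 : ℂ) / (1 - z * (p.1 : ℂ))) * (w * (p.2 : ℂ) / (1 - w * (p.2 : ℂ))) := by
    intro p
    have hq := sqrt_one_add_sq_pos p.1
    have hr := sqrt_one_add_sq_pos p.2
    simp only [hdef, fdef]
    rw [Complex.real_smul]
    push_cast
    field_simp [Complex.ofReal_ne_zero.2 (ne_of_gt hq), Complex.ofReal_ne_zero.2 (ne_of_gt hr),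
      aux_ne hz p.1, aux_ne hw p.2]
  have hA1eq : ∀ p : ℝ × ℝ, (p.1 ^ 2 / (1 + p.1 ^ 2) : ℝ) •
      ((z ^ 2 + z * (p.1 : ℂ)) / (1 - z * (p.1 : ℂ))) =
      z * (p.1 : ℂ) / (1 - z * (p.1 : ℂ)) - z * ((p.1 / (1 + p.1 ^ 2) : ℝ) : ℂ) := by
    intro p
    rw [Complex.real_smul]
    push_cast
    field_simp [aux_ne hz p.1, aux_one_add_sq_ne p.1,
      (by rw [mul_comm]; exact aux_ne hz p.1 : (1:ℂ) - p.1 * z ≠ 0)]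
    ring
  have hA2eq : ∀ p : ℝ × ℝ, (p.2 ^ 2 / (1 + p.2 ^ 2) : ℝ) •
      ((w ^ 2 + w * (p.2 : ℂ)) / (1 - w * (p.2 : ℂ))) =
      w * (p.2 : ℂ) / (1 - w * (p.2 : ℂ)) - w * ((p.2 / (1 + p.2 ^ 2) : ℝ) : ℂ) := by
    intro p
    rw [Complex.real_smul]
    push_cast
    field_simp [aux_ne hw p.2, aux_one_add_sq_ne p.2,
      (by rw [mul_comm]; exact aux_ne hw p.2 : (1:ℂ) - p.2 * w ≠ 0)]
    ring
  have iA1 : Integrable (fun p : ℝ × ℝ => (p.1 ^ 2 / (1 + p.1 ^ 2) : ℝ) •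
      ((z ^ 2 + z * (p.1 : ℂ)) / (1 - z * (p.1 : ℂ)))) τ :=
    (iX1.sub iY1).congr (Filter.Eventually.of_forall fun p => (hA1eq p).symm)
  have iA2 : Integrable (fun p : ℝ × ℝ => (p.2 ^ 2 / (1 + p.2 ^ 2) : ℝ) •
      ((w ^ 2 + w * (p.2 : ℂ)) / (1 - w * (p.2 : ℂ)))) τ :=
    (iX2.sub iY2).congr (Filter.Eventually.of_forall fun p => (hA2eq p).symm)
  have maxbd : ∀ (r : ℝ) (p : ℝ × ℝ), |r| ≤ |h p| →
      ‖r • f p‖ ≤ (‖z‖ / |z.im|) * (‖w‖ / |w.im|) := by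
    intro r p hr
    rw [norm_smul, Real.norm_eq_abs]
    calc |r| * ‖f p‖ ≤ |h p| * ‖f p‖ := mul_le_mul_of_nonneg_right hr (norm_nonneg _)
    _ = ‖h p • f p‖ := by rw [norm_smul, Real.norm_eq_abs]
    _ ≤ _ := by rw [heqK p]; exact prodbd p
  have iB1 : Integrable (fun p => max (h p) 0 • f p) τ := by
    refine intbdd _ ((‖z‖ / |z.im|) * (‖w‖ / |w.im|)) ((hcont.max continuous_const).smul hfcont) fun p => ?_
    refine maxbd _ p ?_
    have h0 : (0:ℝ) ≤ max (h p) 0 := le_max_right _ _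
    rw [_root_.abs_of_nonneg h0]
    exact max_le (le_abs_self _) (abs_nonneg _)
  have iB2 : Integrable (fun p => max (-h p) 0 • f p) τ := by
    refine intbdd _ ((‖z‖ / |z.im|) * (‖w‖ / |w.im|)) ((hcont.neg.max continuous_const).smul hfcont) fun p => ?_
    refine maxbd _ p ?_
    have h0 : (0:ℝ) ≤ max (-h p) 0 := le_max_right _ _
    rw [_root_.abs_of_nonneg h0]
    refine max_le ?_ (abs_nonneg _)
    rw [← abs_neg (h p)]
    exact le_abs_self _
  have iC : Integrable (fun p => h p • f p) τ :=
    iK.congr (Filter.Eventually.of_forall fun p => (heqK p).symm)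
  -- assemble the left-hand side
  simp only [signedIntegralC]
  rw [hposP, hnegP, convP, convN, conv1, conv2]
  have hBsub : (∫ p, max (h p) 0 • f p ∂τ) - (∫ p, max (-h p) 0 • f p ∂τ)
      = ∫ p, h p • f p ∂τ := by
    rw [← integral_sub iB1 iB2]
    congr 1; funext p
    rw [← sub_smul, max_sub_max]
  have iA12 : Integrable (fun p : ℝ × ℝ =>
      (p.1 ^ 2 / (1 + p.1 ^ 2) : ℝ) • ((z ^ 2 + z * (p.1 : ℂ)) / (1 - z * (p.1 : ℂ))) +
      (p.2 ^ 2 / (1 + p.2 ^ 2) : ℝ) • ((w ^ 2 + w * (p.2 : ℂ)) / (1 - w * (p.2 : ℂ)))) τ :=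
    iA1.add iA2
  rw [hBsub, ← integral_add iA1 iA2, ← integral_add iA12 iC]
  -- assemble the right-hand side
  have ea : a = -(∫ p : ℝ × ℝ, p.1 / (1 + p.1 ^ 2) ∂τ) := by
    rw [ha, hμ, integral_smul_measure, ENNReal.toReal_inv, ← hlam, smul_eq_mul]
    field_simp
  have eb : b = -(∫ p : ℝ × ℝ, p.2 / (1 + p.2 ^ 2) ∂τ) := by
    rw [hb, hμ, integral_smul_measure, ENNReal.toReal_inv, ← hlam, smul_eq_mul]
    field_simp
  have eG : (lam : ℂ) * (∫ p : ℝ × ℝ, ((1 - z * (p.1 : ℂ)) * (1 - w * (p.2 : ℂ)))⁻¹ ∂μ)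
      = ∫ p : ℝ × ℝ, ((1 - z * (p.1 : ℂ)) * (1 - w * (p.2 : ℂ)))⁻¹ ∂τ := by
    rw [hμ, integral_smul_measure, ENNReal.toReal_inv, ← hlam, Complex.real_smul,
      ← mul_assoc, ← Complex.ofReal_mul, mul_inv_cancel₀ hlam0, Complex.ofReal_one, one_mul]
  have elam : (lam : ℂ) = ∫ _p : ℝ × ℝ, (1 : ℂ) ∂τ := by
    rw [integral_const, hlam, Complex.real_smul, mul_one]; rfl
  have ofR1 : ((∫ p : ℝ × ℝ, p.1 / (1 + p.1 ^ 2) ∂τ : ℝ) : ℂ)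
      = ∫ p : ℝ × ℝ, ((p.1 / (1 + p.1 ^ 2) : ℝ) : ℂ) ∂τ := integral_ofReal.symm
  have ofR2 : ((∫ p : ℝ × ℝ, p.2 / (1 + p.2 ^ 2) ∂τ : ℝ) : ℂ)
      = ∫ p : ℝ × ℝ, ((p.2 / (1 + p.2 ^ 2) : ℝ) : ℂ) ∂τ := integral_ofReal.symm
  have eaz : (a : ℂ) * z = ∫ p : ℝ × ℝ, -(z * ((p.1 / (1 + p.1 ^ 2) : ℝ) : ℂ)) ∂τ := by
    calc (a : ℂ) * z
        = -(z * ((∫ p : ℝ × ℝ, p.1 / (1 + p.1 ^ 2) ∂τ : ℝ) : ℂ)) := by rw [ea]; push_cast; ring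
    _ = -(z * ∫ p : ℝ × ℝ, ((p.1 / (1 + p.1 ^ 2) : ℝ) : ℂ) ∂τ) := by rw [ofR1]
    _ = -∫ p : ℝ × ℝ, z * ((p.1 / (1 + p.1 ^ 2) : ℝ) : ℂ) ∂τ := by rw [integral_const_mul]
    _ = _ := (integral_neg _).symm
  have ebw : (b : ℂ) * w = ∫ p : ℝ × ℝ, -(w * ((p.2 / (1 + p.2 ^ 2) : ℝ) : ℂ)) ∂τ := by
    calc (b : ℂ) * w
        = -(w * ((∫ p : ℝ × ℝ, p.2 / (1 + p.2 ^ 2) ∂τ : ℝ) : ℂ)) := by rw [eb]; push_cast; ring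
    _ = -(w * ∫ p : ℝ × ℝ, ((p.2 / (1 + p.2 ^ 2) : ℝ) : ℂ) ∂τ) := by rw [ofR2]
    _ = -∫ p : ℝ × ℝ, w * ((p.2 / (1 + p.2 ^ 2) : ℝ) : ℂ) ∂τ := by rw [integral_const_mul]
    _ = _ := (integral_neg _).symm
  have iN1 : Integrable (fun p : ℝ × ℝ => -(z * ((p.1 / (1 + p.1 ^ 2) : ℝ) : ℂ))) τ := iY1.neg
  have iN2 : Integrable (fun p : ℝ × ℝ => -(w * ((p.2 / (1 + p.2 ^ 2) : ℝ) : ℂ))) τ := iY2.neg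
  have iN12 : Integrable (fun p : ℝ × ℝ => -(z * ((p.1 / (1 + p.1 ^ 2) : ℝ) : ℂ)) +
      -(w * ((p.2 / (1 + p.2 ^ 2) : ℝ) : ℂ))) τ := iN1.add iN2
  have iN121 : Integrable (fun p : ℝ × ℝ => -(z * ((p.1 / (1 + p.1 ^ 2) : ℝ) : ℂ)) +
      -(w * ((p.2 / (1 + p.2 ^ 2) : ℝ) : ℂ)) - 1) τ := iN12.sub (integrable_const (1 : ℂ))
  rw [eaz, ebw, eG, elam,
    ← integral_add iN1 iN2,
    ← integral_sub iN12 (integrable_const (1 : ℂ)),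
    ← integral_add iN121 iG]
  refine integral_congr_ae (Filter.Eventually.of_forall fun p => ?_)
  dsimp only
  rw [heqK p, hA1eq p, hA2eq p]
  push_cast
  field_simp [aux_ne hz p.1, aux_ne hw p.2, aux_one_add_sq_ne p.1, aux_one_add_sq_ne p.2]
  ring
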